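/- If u is a prefix of some word in Q_q (the set of quasiperiodic words with quasiperiod q), then there exist words w, w' in Q_q with w a prefix of u, u a prefix of w', |u| - |w| ≤ |q|, and |w'| - |u| ≤ |q|. -/
import Mathlib


/-- `u ^ n` for lists: concatenation of `n` copies of `u`. -/
def listPow {X : Type*} (u : List X) : ℕ → List X
  | 0 => []
  | n+1 => u ++ listPow u n

/-- `P_q = { v : e ⊏ v ⊑ q ⊏ v·q }`. -/
def Pq {X : Type*} (q : List X) : Set (List X) :=
  {v | v ≠ [] ∧ v <+: q ∧ q <+: v ++ q}

/-- membership in the submonoid `P^*` generated by `P`. -/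
def InStar {X : Type*} (P : Set (List X)) (w : List X) : Prop :=
  ∃ l : List (List X), (∀ v ∈ l, v ∈ P) ∧ w = l.flatten

/-- A finite word `w` is quasiperiodic with quasiperiod `q`. -/
def QuasiPeriodic {X : Type*} (q w : List X) : Prop :=
  ∀ j < w.length, ∃ u : List X, u.length ≤ j ∧ j < u.length + q.length ∧ (u ++ q) <+: w

/-- `Q_q`: the set of finite words quasiperiodic with quasiperiod `q`. -/
def Qq {X : Type*} (q : List X) : Set (List X) := {w | QuasiPeriodic q w}

/-- `u` is a (finite) prefix of the infinite word `ξ`. -/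
def InfPrefix {X : Type*} (ξ : ℕ → X) (u : List X) : Prop :=
  u = (List.range u.length).map ξ

/-- An infinite word `ξ` is quasiperiodic with quasiperiod `q`. -/
def QuasiPeriodicInf {X : Type*} (q : List X) (ξ : ℕ → X) : Prop :=
  ∀ j : ℕ, ∃ u : List X, u.length ≤ j ∧ j < u.length + q.length ∧ InfPrefix ξ (u ++ q)

/-- the star root `P \ (P²·P*)`. -/
def StarRoot {X : Type*} (P : Set (List X)) : Set (List X) :=
  {v | v ∈ P ∧ ¬ ∃ (a b : List X) (l : List (List X)),
    a ∈ P ∧ b ∈ P ∧ (∀ x ∈ l, x ∈ P) ∧ v = a ++ b ++ l.flatten}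

/-- `ξ ∈ P^ω`: infinite concatenation of nonempty words of `P`. -/
def InOmega {X : Type*} (P : Set (List X)) (ξ : ℕ → X) : Prop :=
  ∃ f : ℕ → List X, (∀ i, f i ∈ P ∧ f i ≠ []) ∧
    ∀ n, InfPrefix ξ ((List.range n).map f).flatten

lemma nil_mem_Qq {X : Type*} (q : List X) : ([] : List X) ∈ Qq q := by
  intro j hj; simp at hj

lemma qp_of_occ {X : Type*} {q x s : List X} (hq : q ≠ [])
    (hx : x ∈ Qq q) (hs : (s ++ q) <+: x) : (s ++ q) ∈ Qq q := by
  have hqlen : 0 < q.length := List.length_pos_iff.mpr hq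
  intro j hj
  rcases le_or_gt s.length j with h | h
  · exact ⟨s, h, by simpa [List.length_append] using hj, List.prefix_refl _⟩
  · have hjx : j < x.length := lt_of_lt_of_le (by simpa [List.length_append] using hj)
      hs.length_le
    obtain ⟨t, ht1, ht2, ht3⟩ := hx j hjx
    refine ⟨t, ht1, ht2, List.prefix_of_prefix_length_le ht3 hs ?_⟩
    simp only [List.length_append]
    omega

/-- Corollary: a prefix of a word in `Q_q` is sandwiched between two words of `Q_q`
within distance `|q|`. -/
theorem stmt1 {X : Type*} (q : List X) (hq : q ≠ []) (u : List X)
    (hu : ∃ x ∈ Qq q, u <+: x) :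
    ∃ w ∈ Qq q, ∃ w' ∈ Qq q, w <+: u ∧ u <+: w' ∧
      u.length ≤ w.length + q.length ∧ w'.length ≤ u.length + q.length := by
  have hqlen : 0 < q.length := List.length_pos_iff.mpr hq
  obtain ⟨x, hx, hux⟩ := hu
  have hux_len : u.length ≤ x.length := hux.length_le
  obtain ⟨w, hw, hw1, hw2⟩ :
      ∃ w ∈ Qq q, w <+: u ∧ u.length ≤ w.length + q.length := by
    rcases lt_or_ge u.length q.length with h | h
    · exact ⟨[], nil_mem_Qq q, List.nil_prefix, by simp; omega⟩
    · have hj : u.length - q.length < x.length := by omega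
      obtain ⟨t, ht1, ht2, ht3⟩ := hx _ hj
      refine ⟨t ++ q, qp_of_occ hq hx ht3,
        List.prefix_of_prefix_length_le ht3 hux ?_, ?_⟩ <;>
        simp only [List.length_append] <;> omega
  obtain ⟨w', hw', hw'1, hw'2⟩ :
      ∃ w' ∈ Qq q, u <+: w' ∧ w'.length ≤ u.length + q.length := by
    by_cases hu0 : u = []
    · subst hu0; exact ⟨[], nil_mem_Qq q, List.prefix_refl _, by simp⟩
    · have hulen : 0 < u.length := List.length_pos_iff.mpr hu0
      have hj : u.length - 1 < x.length := by omega
      obtain ⟨s, hs1, hs2, hs3⟩ := hx _ hj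
      refine ⟨s ++ q, qp_of_occ hq hx hs3,
        List.prefix_of_prefix_length_le hux hs3 ?_, ?_⟩ <;>
        simp only [List.length_append] <;> omega
  exact ⟨w, hw, w', hw', hw1, hw'1, hw2, hw'2⟩
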